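/- Let a < b, let φ : [a,b] → [a,b] be an affine continuous map with φ(a) < φ(b), let g : [a,b] → [0,∞) be a φ-P-function (φ_h-convex with h(t) = 1) that is Lebesgue integrable, and let f : [a,b] → [0,∞) be Lebesgue integrable and (g,φ_h)-convex dominated on [a,b] with h(t) = 1. Then |f(φ(a)) + f(φ(b)) − (1/(φ(b) − φ(a))) ∫_{φ(a)}^{φ(b)} f(x) dx| ≤ g(φ(a)) + g(φ(b)) − (1/(φ(b) − φ(a))) ∫_{φ(a)}^{φ(b)} g(x) dx. -/

import Mathlib

open MeasureTheory Set

/-- `F` is `φ_h`-convex on `I`. -/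
def PhiHConvexOn (I : Set ℝ) (h φ F : ℝ → ℝ) : Prop :=
  ∀ x ∈ I, ∀ y ∈ I, ∀ t ∈ Set.Ioo (0:ℝ) 1,
    F (t * φ x + (1 - t) * φ y) ≤ h t * F (φ x) + h (1 - t) * F (φ y)

/-- `f` is `(g, φ_h)`-convex dominated on `I`. -/
def GPhiHConvexDominated (I : Set ℝ) (h φ g f : ℝ → ℝ) : Prop :=
  ∀ x ∈ I, ∀ y ∈ I, ∀ t ∈ Set.Ioo (0:ℝ) 1,
    |h t * f (φ x) + h (1 - t) * f (φ y) - f (t * φ x + (1 - t) * φ y)| ≤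
      h t * g (φ x) + h (1 - t) * g (φ y) - g (t * φ x + (1 - t) * φ y)

theorem stmt10 (a b : ℝ) (hab : a < b) (φ f g : ℝ → ℝ)
    (hφmaps : Set.MapsTo φ (Set.Icc a b) (Set.Icc a b))
    (hφaff : ∀ x ∈ Set.Icc a b, ∀ y ∈ Set.Icc a b, ∀ l ∈ Set.Icc (0:ℝ) 1,
      φ (l * x + (1 - l) * y) = l * φ x + (1 - l) * φ y)
    (hφcont : ContinuousOn φ (Set.Icc a b))
    (hφab : φ a < φ b)
    (hg0 : ∀ x ∈ Set.Icc a b, 0 ≤ g x)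
    (hgconv : PhiHConvexOn (Set.Icc a b) (fun _ => 1) φ g)
    (hgint : IntegrableOn g (Set.Icc a b))
    (hf0 : ∀ x ∈ Set.Icc a b, 0 ≤ f x)
    (hfint : IntegrableOn f (Set.Icc a b))
    (hfdom : GPhiHConvexDominated (Set.Icc a b) (fun _ => 1) φ g f) :
    |(f (φ a) + f (φ b)) - (1 / (φ b - φ a)) * ∫ x in φ a..φ b, f x| ≤
      (g (φ a) + g (φ b)) - (1 / (φ b - φ a)) * ∫ x in φ a..φ b, g x := by
  have haI : a ∈ Set.Icc a b := left_mem_Icc.2 hab.le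
  have hbI : b ∈ Set.Icc a b := right_mem_Icc.2 hab.le
  have hαI := hφmaps haI
  have hβI := hφmaps hbI
  set α := φ a with hα
  set β := φ b with hβ
  have hc : α - β ≠ 0 := by intro h; linarith
  have hsub : Set.uIoc α β ⊆ Set.Icc a b :=
    Set.Ioc_subset_Icc_self.trans (by rw [← Set.uIcc]; exact Set.uIcc_subset_Icc hαI hβI)
  have hfI : IntervalIntegrable f volume α β := by
    rw [intervalIntegrable_iff]; exact hfint.mono_set hsub
  have hgI : IntervalIntegrable g volume α β := by
    rw [intervalIntegrable_iff]; exact hgint.mono_set hsub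
  have compInt : ∀ F : ℝ → ℝ, IntervalIntegrable F volume α β →
      IntervalIntegrable (fun t => F ((α - β) * t + β)) volume 0 1 := by
    intro F hF
    have h1 := (hF.comp_add_right β).comp_mul_left (c := α - β)
    simp only [sub_self, zero_div, div_self hc] at h1
    exact h1.symm
  have compEq : ∀ F : ℝ → ℝ, (∫ t in (0:ℝ)..1, F ((α - β) * t + β))
      = (1 / (β - α)) * ∫ x in α..β, F x := by
    intro F
    rw [intervalIntegral.integral_comp_mul_add F hc β]
    have e1 : (α - β) * 0 + β = β := by ring
    have e2 : (α - β) * 1 + β = α := by ring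
    rw [e1, e2, intervalIntegral.integral_symm, smul_eq_mul,
      show (α - β) = -(β - α) by ring, inv_neg, one_div]
    ring
  have key : ∀ t ∈ Set.Ioo (0:ℝ) 1,
      |f α + f β - f ((α - β) * t + β)| ≤ g α + g β - g ((α - β) * t + β) := by
    intro t ht
    have h1 := hfdom a haI b hbI t ht
    have harg : t * φ a + (1 - t) * φ b = (α - β) * t + β := by rw [← hα, ← hβ]; ring
    rw [harg] at h1
    simpa using h1
  have hfc := compInt f hfI
  have hgc := compInt g hgI
  have hu : IntervalIntegrable (fun t => f α + f β - f ((α - β) * t + β)) volume 0 1 :=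
    (intervalIntegrable_const).sub hfc
  have hv : IntervalIntegrable (fun t => g α + g β - g ((α - β) * t + β)) volume 0 1 :=
    (intervalIntegrable_const).sub hgc
  have h01 : ∀ᵐ t ∂(volume : Measure ℝ), t ∉ ({0, 1} : Set ℝ) := by
    have : (volume : Measure ℝ) ({0, 1} : Set ℝ) = 0 :=
      Set.Finite.measure_zero (by simp) volume
    exact (MeasureTheory.measure_eq_zero_iff_ae_notMem).1 this
  have hae : ∀ᵐ t ∂(volume.restrict (Set.Icc (0:ℝ) 1)),
      |f α + f β - f ((α - β) * t + β)| ≤ g α + g β - g ((α - β) * t + β) := by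
    filter_upwards [ae_restrict_mem measurableSet_Icc, ae_restrict_of_ae h01] with t htI htn
    simp only [Set.mem_insert_iff, Set.mem_singleton_iff, not_or] at htn
    exact key t ⟨lt_of_le_of_ne htI.1 (Ne.symm htn.1), lt_of_le_of_ne htI.2 htn.2⟩
  have step1 : |∫ t in (0:ℝ)..1, (f α + f β - f ((α - β) * t + β))| ≤
      ∫ t in (0:ℝ)..1, (g α + g β - g ((α - β) * t + β)) :=
    le_trans (intervalIntegral.abs_integral_le_integral_abs zero_le_one)
      (intervalIntegral.integral_mono_ae_restrict zero_le_one hu.abs hv hae)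
  have eu : (∫ t in (0:ℝ)..1, (f α + f β - f ((α - β) * t + β)))
      = (f α + f β) - (1 / (β - α)) * ∫ x in α..β, f x := by
    rw [intervalIntegral.integral_sub intervalIntegrable_const hfc, compEq f]
    simp
  have ev : (∫ t in (0:ℝ)..1, (g α + g β - g ((α - β) * t + β)))
      = (g α + g β) - (1 / (β - α)) * ∫ x in α..β, g x := by
    rw [intervalIntegral.integral_sub intervalIntegrable_const hgc, compEq g]
    simp
  rw [eu, ev] at step1
  exact step1
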